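/- If G is a global amoeba of order n with minimum degree 1, then G has at most ⌊n²/4⌋ edges, and its clique number and chromatic number are both at most ⌊n/2⌋ + 1. Moreover, if e(G) = ⌊n²/4⌋, then ω(G) = χ(G) = ⌊n/2⌋ + 1. -/

import Mathlib

open SimpleGraph Equiv

/-- The labeled copy `G_σ`, with edges `v_{σ⁻¹ i} v_{σ⁻¹ j}` for edges `v_i v_j` of `G`. -/
def copyG {V : Type*} (G : SimpleGraph V) (σ : Equiv.Perm V) : SimpleGraph V where
  Adj a b := G.Adj (σ a) (σ b)
  symm := ⟨fun _ _ h => h.symm⟩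
  loopless := ⟨fun _ h => G.irrefl h⟩

/-- The graph `G - v_r v_s + v_k v_l`. -/
def replaceG {V : Type*} (G : SimpleGraph V) (r s k l : V) : SimpleGraph V :=
  SimpleGraph.fromEdgeSet ((G.edgeSet \ {s(r, s)}) ∪ {s(k, l)})

/-- The edge-replacement `rs → kl` is feasible: `v_r v_s ∈ E(G)`, `v_k v_l` is a non-edge or
`{k,l} = {r,s}`, and `G - v_r v_s + v_k v_l ≅ G`. -/
def IsFeasible {V : Type*} (G : SimpleGraph V) (r s k l : V) : Prop :=
  G.Adj r s ∧ (Gᶜ.Adj k l ∨ s(k, l) = s(r, s)) ∧ Nonempty (replaceG G r s k l ≃g G)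

/-- The permutations realizing feasible edge-replacements of `G`. -/
def feasiblePerms {V : Type*} (G : SimpleGraph V) : Set (Equiv.Perm V) :=
  {σ | ∃ r s k l, IsFeasible G r s k l ∧ copyG G σ = replaceG G r s k l}

/-- The group `S_G` generated by all permutations realizing feasible edge-replacements. -/
def ampGroup {V : Type*} (G : SimpleGraph V) : Subgroup (Equiv.Perm V) :=
  Subgroup.closure (feasiblePerms G)

/-- `G` is a local amoeba if `S_G` is the full symmetric group. -/
def LocalAmoeba {V : Type*} (G : SimpleGraph V) : Prop := ampGroup G = ⊤

/-- Disjoint union of two graphs. -/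
def sumGraph {V W : Type*} (H : SimpleGraph V) (H' : SimpleGraph W) : SimpleGraph (V ⊕ W) :=
  SimpleGraph.map Sum.inl H ⊔ SimpleGraph.map Sum.inr H'

/-- `G` together with `t` additional isolated vertices. -/
def addIsolated {V : Type*} (G : SimpleGraph V) (t : ℕ) : SimpleGraph (V ⊕ Fin t) :=
  sumGraph G (⊥ : SimpleGraph (Fin t))

/-- `G` is a global amoeba if `G ∪ tK₁` is a local amoeba for all sufficiently large `t`. -/
def GlobalAmoeba {V : Type*} (G : SimpleGraph V) : Prop :=
  ∃ T : ℕ, ∀ t ≥ T, LocalAmoeba (addIsolated G t)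

noncomputable def ncdeg {X : Type*} (H : SimpleGraph X) (x : X) : ℕ := {y | H.Adj x y}.ncard

lemma ncdeg_copy {X : Type*} (H : SimpleGraph X) (σ : Equiv.Perm X) (x : X) :
    ncdeg (copyG H σ) x = ncdeg H (σ x) := by
  unfold ncdeg
  have h1 : {y | (copyG H σ).Adj x y} = σ.symm '' {y | H.Adj (σ x) y} := by
    ext y
    simp only [Set.mem_setOf_eq, Set.mem_image]
    constructor
    · intro h; exact ⟨σ y, h, σ.symm_apply_apply y⟩
    · rintro ⟨z, hz, rfl⟩; show H.Adj (σ x) (σ (σ.symm z)); rwa [σ.apply_symm_apply]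
  rw [h1, Set.ncard_image_of_injective _ σ.symm.injective]

lemma ncdeg_replace {X : Type*} [Finite X] (H : SimpleGraph X) (r s k l : X) (x : X) :
    ncdeg (replaceG H r s k l) x ≤ ncdeg H x + 1 ∧
    ncdeg H x ≤ ncdeg (replaceG H r s k l) x + 1 := by
  classical
  have hadj : ∀ a b : X, (replaceG H r s k l).Adj a b ↔
      (s(a, b) ∈ (H.edgeSet \ {s(r, s)}) ∪ {s(k, l)}) ∧ a ≠ b := by
    intro a b; rw [replaceG]; exact SimpleGraph.fromEdgeSet_adj _
  set c : X := if x = k then l else k with hc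
  set c' : X := if x = r then s else r with hc'
  have hsub1 : {y | (replaceG H r s k l).Adj x y} ⊆ {y | H.Adj x y} ∪ {c} := by
    intro y hy
    obtain ⟨hmem, hne⟩ := (hadj x y).mp hy
    rcases hmem with ⟨he, -⟩ | he
    · exact Or.inl ((SimpleGraph.mem_edgeSet H).mp he)
    · right
      simp only [Set.mem_singleton_iff] at he ⊢
      rw [Sym2.eq_iff] at he
      rcases he with ⟨hxk, hyl⟩ | ⟨hxl, hyk⟩
      · rw [hc, if_pos hxk]; exact hyl
      · rcases eq_or_ne x k with h | h
        · rw [hc, if_pos h]; rw [hyk, ← h, hxl]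
        · rw [hc, if_neg h]; exact hyk
  have hsub2 : {y | H.Adj x y} ⊆ {y | (replaceG H r s k l).Adj x y} ∪ {c'} := by
    intro y hy
    simp only [Set.mem_setOf_eq] at hy
    rcases eq_or_ne (s(x, y) : Sym2 X) s(r, s) with h | h
    · right
      simp only [Set.mem_singleton_iff]
      rw [Sym2.eq_iff] at h
      rcases h with ⟨hxr, hys⟩ | ⟨hxs, hyr⟩
      · rw [hc', if_pos hxr]; exact hys
      · rcases eq_or_ne x r with h2 | h2
        · rw [hc', if_pos h2]; rw [hyr, ← h2, hxs]
        · rw [hc', if_neg h2]; exact hyr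
    · left
      exact (hadj x y).mpr ⟨Or.inl ⟨(SimpleGraph.mem_edgeSet H).mpr hy, h⟩, hy.ne⟩
  constructor
  · calc {y | (replaceG H r s k l).Adj x y}.ncard
        ≤ ({y | H.Adj x y} ∪ {c}).ncard := Set.ncard_le_ncard hsub1 (Set.toFinite _)
      _ ≤ {y | H.Adj x y}.ncard + ({c} : Set X).ncard := Set.ncard_union_le _ _
      _ = ncdeg H x + 1 := by rw [Set.ncard_singleton]; rfl
  · calc {y | H.Adj x y}.ncard
        ≤ ({y | (replaceG H r s k l).Adj x y} ∪ {c'}).ncard :=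
          Set.ncard_le_ncard hsub2 (Set.toFinite _)
      _ ≤ {y | (replaceG H r s k l).Adj x y}.ncard + ({c'} : Set X).ncard :=
          Set.ncard_union_le _ _
      _ = ncdeg (replaceG H r s k l) x + 1 := by rw [Set.ncard_singleton]; rfl

lemma ncdeg_addIsolated_inl {V : Type*} [Fintype V] (G : SimpleGraph V) [DecidableRel G.Adj]
    (t : ℕ) (v : V) : ncdeg (addIsolated G t) (Sum.inl v) = G.degree v := by
  classical
  have h1 : {y | (addIsolated G t).Adj (Sum.inl v) y} = Sum.inl '' {w | G.Adj v w} := by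
    ext y
    simp only [addIsolated, sumGraph, SimpleGraph.sup_adj, SimpleGraph.map_adj,
      Function.Embedding.coeFn_mk, Set.mem_setOf_eq, Set.mem_image, bot_adj]
    constructor
    · rintro (⟨-, a, b, hab, ha, rfl⟩ | ⟨-, a, b, hab, -, -⟩)
      · cases Sum.inl_injective ha; exact ⟨b, hab, rfl⟩
      · exact absurd hab (by simp)
    · rintro ⟨w, hw, rfl⟩; exact Or.inl ⟨Sum.inl_injective.ne hw.ne, v, w, hw, rfl, rfl⟩
  rw [ncdeg, h1, Set.ncard_image_of_injective _ Sum.inl_injective]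
  rw [show {w | G.Adj v w} = ↑(G.neighborFinset v) by ext w; simp [mem_neighborFinset]]
  rw [Set.ncard_coe_finset]
  rfl

lemma ncdeg_addIsolated_inr {V : Type*} (G : SimpleGraph V) (t : ℕ) (i : Fin t) :
    ncdeg (addIsolated G t) (Sum.inr i) = 0 := by
  have h1 : {y | (addIsolated G t).Adj (Sum.inr i) y} = ∅ := by
    ext y
    simp only [addIsolated, sumGraph, SimpleGraph.sup_adj, SimpleGraph.map_adj,
      Function.Embedding.coeFn_mk, Set.mem_setOf_eq, Set.mem_empty_iff_false, iff_false, bot_adj]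
    rintro (⟨-, a, b, hab, ha, rfl⟩ | ⟨-, a, b, hab, -, -⟩)
    · exact Sum.inl_ne_inr ha
    · exact hab
  rw [ncdeg, h1, Set.ncard_empty]

theorem greedy_colorable {V : Type*} [Fintype V] [DecidableEq V] (G : SimpleGraph V) [DecidableRel G.Adj] (c : ℕ)
    (h : ∀ t : Finset V, t.Nonempty → ∃ v ∈ t, ((t.erase v).filter (G.Adj v)).card ≤ c) :
    G.Colorable (c + 1) := by
  classical
  have key : ∀ t : Finset V, ∃ f : V → Fin (c + 1),
      ∀ a ∈ t, ∀ b ∈ t, G.Adj a b → f a ≠ f b := by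
    intro t
    induction t using Finset.strongInduction with
    | _ t ih =>
      rcases t.eq_empty_or_nonempty with rfl | hne
      · exact ⟨fun _ => ⟨0, Nat.succ_pos c⟩, by simp⟩
      · obtain ⟨v, hvt, hvdeg⟩ := h t hne
        obtain ⟨f, hf⟩ := ih (t.erase v) (Finset.erase_ssubset hvt)
        set used : Finset (Fin (c + 1)) := ((t.erase v).filter (G.Adj v)).image f with hused
        have hcard : used.card < c + 1 :=
          lt_of_le_of_lt Finset.card_image_le (Nat.lt_succ_of_le hvdeg)
        have hex : ∃ x : Fin (c + 1), x ∉ used := by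
          by_contra hall
          push_neg at hall
          have : (Finset.univ : Finset (Fin (c + 1))) ⊆ used := fun x _ => hall x
          have := Finset.card_le_card this
          simp [Fintype.card_fin] at this
          omega
        obtain ⟨x, hx⟩ := hex
        refine ⟨Function.update f v x, ?_⟩
        intro a ha b hb hadj
        by_cases hav : a = v
        · by_cases hbv : b = v
          · rw [hav, hbv] at hadj; exact absurd hadj G.irrefl
          · rw [hav, Function.update_self, Function.update_of_ne hbv]
            rw [hav] at hadj
            intro heq
            apply hx
            rw [hused, heq]
            exact Finset.mem_image_of_mem f
              (Finset.mem_filter.mpr ⟨Finset.mem_erase.mpr ⟨hbv, hb⟩, hadj⟩)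
        · by_cases hbv : b = v
          · rw [hbv, Function.update_self, Function.update_of_ne hav]
            rw [hbv] at hadj
            intro heq
            apply hx
            rw [hused, ← heq]
            exact Finset.mem_image_of_mem f
              (Finset.mem_filter.mpr ⟨Finset.mem_erase.mpr ⟨hav, ha⟩, hadj.symm⟩)
          · rw [Function.update_of_ne hav, Function.update_of_ne hbv]
            exact hf a (Finset.mem_erase.mpr ⟨hav, ha⟩) b (Finset.mem_erase.mpr ⟨hbv, hb⟩) hadj
  obtain ⟨f, hf⟩ := key Finset.univ
  exact ⟨SimpleGraph.Coloring.mk f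
    (fun {a b} hadj => hf a (Finset.mem_univ a) b (Finset.mem_univ b) hadj)⟩

theorem lemB {V : Type*} [Fintype V] [DecidableEq V] (G : SimpleGraph V) [DecidableRel G.Adj]
    (hint : ∀ j, 1 ≤ j → (∃ v, j ≤ G.degree v) → ∃ v, G.degree v = j)
    (m : ℕ) (hm : 1 ≤ m) (hex : ∃ v, m ≤ G.degree v) :
    (Finset.univ.filter fun v => m ≤ G.degree v).card + m ≤ Fintype.card V + 1 := by
  classical
  obtain ⟨v₀, hv₀⟩ := hex
  have hw : ∀ j ∈ Finset.Icc 1 (m - 1), ∃ v, G.degree v = j := by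
    intro j hj
    rw [Finset.mem_Icc] at hj
    exact hint j hj.1 ⟨v₀, by omega⟩
  choose w hwspec using hw
  set S := Finset.univ.filter fun v => m ≤ G.degree v with hS
  set W : Finset V := (Finset.Icc 1 (m-1)).attach.image (fun j => w j.1 j.2) with hW
  have hWcard : W.card = m - 1 := by
    rw [hW, Finset.card_image_of_injOn, Finset.card_attach, Nat.card_Icc]
    · omega
    · intro x _ y _ hxy
      have h1 := hwspec x.1 x.2
      have h2 := hwspec y.1 y.2
      simp only at hxy
      rw [hxy, h2] at h1
      exact Subtype.ext h1.symm
  have hdisj : Disjoint S W := by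
    rw [Finset.disjoint_right]
    intro x hxW hxS
    rw [hW, Finset.mem_image] at hxW
    obtain ⟨j, -, rfl⟩ := hxW
    have hj := j.2
    rw [Finset.mem_Icc] at hj
    have hd := hwspec j.1 j.2
    rw [hS, Finset.mem_filter] at hxS
    omega
  have hcard : S.card + W.card ≤ Fintype.card V := by
    rw [← Finset.card_union_of_disjoint hdisj, ← Finset.card_univ]
    exact Finset.card_le_card (Finset.subset_univ _)
  omega

theorem main_count {V : Type*} [Fintype V] [DecidableEq V] (G : SimpleGraph V) [DecidableRel G.Adj]
    (hint : ∀ j, 1 ≤ j → (∃ v, j ≤ G.degree v) → ∃ v, G.degree v = j)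
    (hpos : ∀ v, 1 ≤ G.degree v) (hV : 0 < Fintype.card V) :
    G.edgeFinset.card ≤ Fintype.card V ^ 2 / 4 ∧
    (G.edgeFinset.card = Fintype.card V ^ 2 / 4 →
      ∃ s : Finset V, G.IsClique ↑s ∧ s.card = Fintype.card V / 2 + 1) := by
  classical
  set n := Fintype.card V with hn
  have hdeg_def : ∀ v, (G.neighborFinset v).card = G.degree v := fun v => rfl
  -- Durfee number k
  set kset := (Finset.range (n+1)).filter
    (fun j => j ≤ (Finset.univ.filter fun v => j ≤ G.degree v).card) with hkset
  have h0k : (0 : ℕ) ∈ kset := by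
    rw [hkset, Finset.mem_filter, Finset.mem_range]; exact ⟨by omega, by omega⟩
  set k := kset.max' ⟨0, h0k⟩ with hk
  have hkmem : k ∈ kset := Finset.max'_mem _ _
  clear_value k
  have hkn : k ≤ n := by
    have := (Finset.mem_filter.mp hkmem).1; rw [Finset.mem_range] at this; omega
  have hkBk : k ≤ (Finset.univ.filter fun v => k ≤ G.degree v).card :=
    (Finset.mem_filter.mp hkmem).2
  have hk1 : 1 ≤ k := by
    rw [hk]
    apply Finset.le_max'
    rw [hkset, Finset.mem_filter, Finset.mem_range]
    refine ⟨by omega, ?_⟩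
    have hfu : (Finset.univ.filter fun v => 1 ≤ G.degree v) = Finset.univ :=
      Finset.filter_true_of_mem (fun v _ => hpos v)
    rw [hfu, Finset.card_univ]; omega
  have hksucc : (Finset.univ.filter fun v => k+1 ≤ G.degree v).card ≤ k := by
    by_cases hc : k + 1 ≤ n
    · by_contra hgt
      push_neg at hgt
      have hmem2 : k + 1 ∈ kset := by
        rw [hkset, Finset.mem_filter, Finset.mem_range]; exact ⟨by omega, by omega⟩
      have hle2 := Finset.le_max' kset (k+1) hmem2
      rw [← hk] at hle2
      omega
    · have hemp : (Finset.univ.filter fun v => k+1 ≤ G.degree v) = ∅ := by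
        rw [Finset.filter_eq_empty_iff]
        intro v _
        have := G.degree_lt_card_verts v
        omega
      rw [hemp]; simp
  -- the set S of k vertices of largest degree
  set big := Finset.univ.filter (fun v => k+1 ≤ G.degree v) with hbig
  set bm := Finset.univ.filter (fun v => k ≤ G.degree v) with hbm
  have hbigbm : big ⊆ bm := by
    intro v hv
    rw [hbig, Finset.mem_filter] at hv
    rw [hbm, Finset.mem_filter]
    exact ⟨hv.1, by omega⟩
  obtain ⟨S, hbigS, hSbm, hScard⟩ := Finset.exists_subsuperset_card_eq hbigbm hksucc hkBk
  have hSk : ∀ v ∈ S, k ≤ G.degree v := fun v hv => (Finset.mem_filter.mp (hSbm hv)).2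
  have hSc : ∀ v, v ∉ S → G.degree v ≤ k := by
    intro v hv
    by_contra hgt
    push_neg at hgt
    exact hv (hbigS (by rw [hbig, Finset.mem_filter]; exact ⟨Finset.mem_univ v, hgt⟩))
  -- witnesses of degrees 1..k-1
  have hSne : S.Nonempty := Finset.card_pos.mp (by omega)
  obtain ⟨vS, hvS⟩ := hSne
  have hw : ∀ j ∈ Finset.Icc 1 (k - 1), ∃ v, G.degree v = j := by
    intro j hj
    rw [Finset.mem_Icc] at hj
    exact hint j hj.1 ⟨vS, by have := hSk vS hvS; omega⟩
  choose w hwspec using hw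
  set W : Finset V := (Finset.Icc 1 (k-1)).attach.image (fun j => w j.1 j.2) with hW
  have hWcard : W.card = k - 1 := by
    rw [hW, Finset.card_image_of_injOn, Finset.card_attach, Nat.card_Icc]
    · omega
    · intro x _ y _ hxy
      have h1 := hwspec x.1 x.2
      have h2 := hwspec y.1 y.2
      simp only at hxy
      rw [hxy, h2] at h1
      exact Subtype.ext h1.symm
  set R := Finset.univ \ S with hR
  have hWR : W ⊆ R := by
    intro x hx
    rw [hW, Finset.mem_image] at hx
    obtain ⟨j, -, rfl⟩ := hx
    have hj := j.2
    rw [Finset.mem_Icc] at hj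
    have hd := hwspec j.1 j.2
    rw [hR, Finset.mem_sdiff]
    refine ⟨Finset.mem_univ _, fun hmem => ?_⟩
    have := hSk _ hmem
    omega
  have hRcard : R.card = n - k := by
    rw [hR, Finset.card_sdiff_of_subset (Finset.subset_univ S), Finset.card_univ, hScard]
  have hdeg_split : ∀ v, G.degree v =
      (G.neighborFinset v ∩ S).card + (G.neighborFinset v \ S).card := fun v =>
    ((Finset.card_inter_add_card_sdiff (G.neighborFinset v) S).trans (hdeg_def v)).symm
  have hcross : ∑ v ∈ S, (G.neighborFinset v \ S).card
      = ∑ u ∈ R, (G.neighborFinset u ∩ S).card := by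
    have h1 : ∀ v, G.neighborFinset v \ S = R.filter (fun u => G.Adj v u) := by
      intro v
      ext u
      simp only [Finset.mem_sdiff, mem_neighborFinset, hR, Finset.mem_filter, Finset.mem_univ,
        true_and]
      tauto
    have h2 : ∀ u, G.neighborFinset u ∩ S = S.filter (fun v => G.Adj v u) := by
      intro u
      ext v
      simp only [Finset.mem_inter, mem_neighborFinset, Finset.mem_filter]
      rw [G.adj_comm]
      tauto
    calc ∑ v ∈ S, (G.neighborFinset v \ S).card
        = ∑ v ∈ S, ∑ u ∈ R, (if G.Adj v u then 1 else 0) := by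
          refine Finset.sum_congr rfl fun v _ => ?_
          rw [h1 v, Finset.card_filter]
      _ = ∑ u ∈ R, ∑ v ∈ S, (if G.Adj v u then 1 else 0) := Finset.sum_comm
      _ = ∑ u ∈ R, (G.neighborFinset u ∩ S).card := by
          refine Finset.sum_congr rfl fun u _ => ?_
          rw [h2 u, Finset.card_filter]
  have hinter_sub : ∀ v ∈ S, G.neighborFinset v ∩ S ⊆ S.erase v := by
    intro v hv u hu
    rw [Finset.mem_inter] at hu
    refine Finset.mem_erase.mpr ⟨fun h => ?_, hu.2⟩
    rw [h] at hu
    exact G.notMem_neighborFinset_self _ hu.1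
  have hinterS : ∀ v ∈ S, (G.neighborFinset v ∩ S).card ≤ k - 1 := by
    intro v hv
    calc (G.neighborFinset v ∩ S).card ≤ (S.erase v).card :=
          Finset.card_le_card (hinter_sub v hv)
      _ = k - 1 := by rw [Finset.card_erase_of_mem hv, hScard]
  have hinterR : ∀ u ∈ R, (G.neighborFinset u ∩ S).card ≤ G.degree u := fun u _ =>
    le_trans (Finset.card_le_card Finset.inter_subset_left) (le_of_eq (hdeg_def u))
  set T := ∑ u ∈ R, G.degree u with hT
  clear_value T
  have hsum_split : ∑ v, G.degree v = ∑ v ∈ S, G.degree v + T := by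
    rw [hT, hR, ← Finset.sum_sdiff (Finset.subset_univ S)]
    omega
  have hSsplit : ∑ v ∈ S, G.degree v =
      ∑ v ∈ S, (G.neighborFinset v ∩ S).card + ∑ v ∈ S, (G.neighborFinset v \ S).card := by
    rw [← Finset.sum_add_distrib]
    exact Finset.sum_congr rfl fun v _ => hdeg_split v
  have hb1 : ∑ v ∈ S, (G.neighborFinset v ∩ S).card ≤ k * (k-1) := by
    calc ∑ v ∈ S, (G.neighborFinset v ∩ S).card ≤ ∑ _v ∈ S, (k-1) :=
          Finset.sum_le_sum hinterS
      _ = k * (k-1) := by rw [Finset.sum_const, hScard, smul_eq_mul]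
  have hb2 : ∑ v ∈ S, (G.neighborFinset v \ S).card ≤ T := by
    rw [hcross, hT]
    exact Finset.sum_le_sum hinterR
  have hstepA : ∑ v ∈ S, G.degree v ≤ k * (k-1) + T := by
    rw [hSsplit]; exact Nat.add_le_add hb1 hb2
  -- tail
  set q := (n - k) - (k - 1) with hq
  clear_value q
  have hkp : k - 1 ≤ n - k := by
    have := Finset.card_le_card hWR
    rw [hWcard, hRcard] at this
    exact this
  have e1 : (k-1) + q = n - k := by omega
  have hRWcard : (R \ W).card = q := by
    rw [Finset.card_sdiff_of_subset hWR, hRcard, hWcard, hq]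
  have hWsum : (∑ u ∈ W, G.degree u) * 2 = k * (k-1) := by
    have h3 : ∑ u ∈ W, G.degree u = ∑ j ∈ Finset.Icc 1 (k-1), j := by
      rw [hW, Finset.sum_image]
      · rw [← Finset.sum_attach (Finset.Icc 1 (k-1)) (fun j => j)]
        exact Finset.sum_congr rfl fun j _ => hwspec j.1 j.2
      · intro x _ y _ hxy
        have h1 := hwspec x.1 x.2
        have h2 := hwspec y.1 y.2
        simp only at hxy
        rw [hxy, h2] at h1
        exact Subtype.ext h1.symm
    have h4 : Finset.range k = insert 0 (Finset.Icc 1 (k-1)) := by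
      ext j
      simp only [Finset.mem_range, Finset.mem_insert, Finset.mem_Icc]
      omega
    have h5 : ∑ j ∈ Finset.Icc 1 (k-1), j = ∑ j ∈ Finset.range k, j := by
      rw [h4, Finset.sum_insert (by simp), zero_add]
    rw [h3, h5, Finset.sum_range_id_mul_two]
  have hTsplit : T = ∑ u ∈ W, G.degree u + ∑ u ∈ R \ W, G.degree u := by
    rw [hT, ← Finset.sum_sdiff hWR]
    omega
  have htailsum : ∑ u ∈ R \ W, G.degree u ≤ q * k := by
    calc ∑ u ∈ R \ W, G.degree u ≤ ∑ _u ∈ R \ W, k := by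
          refine Finset.sum_le_sum fun u hu => ?_
          have huS : u ∉ S := by
            have := (Finset.mem_sdiff.mp (Finset.mem_sdiff.mp hu).1).2
            exact this
          exact hSc u huS
      _ = q * k := by rw [Finset.sum_const, hRWcard, smul_eq_mul]
  have hstepB : 2 * T + k * (k-1) ≤ 2 * (k * (n-k)) := by
    have h6 : k * (n - k) = k*(k-1) + k*q := by
      rw [← e1]; ring
    calc 2 * T + k * (k-1)
        = 2 * (∑ u ∈ W, G.degree u) + 2 * (∑ u ∈ R \ W, G.degree u) + k * (k-1) := by
          rw [hTsplit]; ring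
      _ ≤ 2 * (∑ u ∈ W, G.degree u) + 2 * (q * k) + k * (k-1) := by
          have := htailsum; omega
      _ = 2 * (k * (n-k)) := by
          rw [h6]
          have h7 : 2 * (∑ u ∈ W, G.degree u) = k * (k - 1) := by omega
          rw [h7]; ring
  have hmain : ∑ v, G.degree v ≤ 2 * (k * (n - k)) := by
    calc ∑ v, G.degree v = ∑ v ∈ S, G.degree v + T := hsum_split
      _ ≤ (k * (k-1) + T) + T := by have := hstepA; omega
      _ = 2 * T + k * (k-1) := by ring
      _ ≤ 2 * (k * (n-k)) := hstepB
  have h2e : 2 * G.edgeFinset.card = ∑ v, G.degree v := (G.sum_degrees_eq_twice_card_edges).symm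
  have hekp : G.edgeFinset.card ≤ k * (n - k) := by
    have h8 : 2 * G.edgeFinset.card ≤ 2 * (k * (n-k)) := by rw [h2e]; exact hmain
    omega
  have hkpn : k * (n-k) ≤ n^2/4 := by
    rw [Nat.le_div_iff_mul_le (by norm_num : (0:ℕ) < 4)]
    have h4n : n = k + (n - k) := by omega
    have ht : 2 * k * (n-k) ≤ k^2 + (n-k)^2 := two_mul_le_add_sq k (n-k)
    have hx : (k + (n-k))^2 = k^2 + 2*k*(n-k) + (n-k)^2 := by ring
    have hgoal : k * (n-k) * 4 ≤ (k + (n-k))^2 := by linarith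
    rw [← h4n] at hgoal
    exact hgoal
  refine ⟨le_trans hekp hkpn, ?_⟩
  -- equality case
  intro heq
  have hkpeq : k * (n - k) = n^2/4 := le_antisymm hkpn (by omega)
  have hsum_eq : ∑ v, G.degree v = 2 * (k * (n-k)) := by
    rw [← h2e, heq, hkpeq]
  have hA_eq : ∑ v ∈ S, G.degree v = k*(k-1) + T := by
    have := hstepA; have := hstepB; have := hsum_split
    omega
  have hb1eq : ∑ v ∈ S, (G.neighborFinset v ∩ S).card = k * (k-1) := by
    have := hSsplit; have := hb1; have := hb2
    omega
  have hb2eq : ∑ u ∈ R, (G.neighborFinset u ∩ S).card = T := by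
    have := hSsplit; have := hb1; have := hb2; have := hcross
    omega
  -- S is a clique
  have hS_inter_tight : ∀ v ∈ S, (G.neighborFinset v ∩ S).card = k - 1 := by
    by_contra hnot
    push_neg at hnot
    obtain ⟨v, hv, hne⟩ := hnot
    have hlt :  (G.neighborFinset v ∩ S).card < k - 1 := lt_of_le_of_ne (hinterS v hv) hne
    have hstrict : ∑ v ∈ S, (G.neighborFinset v ∩ S).card < ∑ _v ∈ S, (k-1) :=
      Finset.sum_lt_sum hinterS ⟨v, hv, hlt⟩
    rw [Finset.sum_const, hScard, smul_eq_mul] at hstrict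
    omega
  have hclique : G.IsClique (↑S : Set V) := by
    intro a ha b hb hab
    have haS : a ∈ S := ha
    have hbS : b ∈ S := hb
    have hEq : G.neighborFinset a ∩ S = S.erase a :=
      Finset.eq_of_subset_of_card_le (hinter_sub a haS)
        (by rw [Finset.card_erase_of_mem haS, hScard, hS_inter_tight a haS])
    have hbmem : b ∈ S.erase a := Finset.mem_erase.mpr ⟨fun h => hab (by rw [h]), hbS⟩
    rw [← hEq, Finset.mem_inter] at hbmem
    exact (mem_neighborFinset G a b).mp hbmem.1
  by_cases hcase : n/2 + 1 ≤ k
  · obtain ⟨s, hsub, hscard⟩ := Finset.exists_subset_card_eq (s := S) (n := n/2+1) (by omega)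
    exact ⟨s, hclique.subset (Finset.coe_subset.mpr hsub), hscard⟩
  · push_neg at hcase
    have h2k : 2*k ≤ n := by omega
    have hD : (n - 2*k)^2 + 4*(k*(n-k)) = n^2 := by
      have hsplit2 : n - k = k + (n - 2*k) := by omega
      have hsplit3 : n = 2*k + (n - 2*k) := by omega
      calc (n - 2*k)^2 + 4*(k*(n-k)) = (n - 2*k)^2 + 4*(k*(k + (n - 2*k))) := by rw [← hsplit2]
        _ = (2*k + (n - 2*k))^2 := by ring
        _ = n^2 := by rw [← hsplit3]
    have hmod : n^2 = 4 * (n^2/4) + n^2 % 4 := (Nat.div_add_mod _ _).symm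
    have hmodlt : n^2 % 4 < 4 := Nat.mod_lt _ (by norm_num)
    have hsq : (n - 2*k)^2 ≤ 3 := by
      have h9 : 4*(k*(n-k)) = 4*(n^2/4) := by rw [hkpeq]
      omega
    have hd1 : n - 2*k ≤ 1 := by
      by_contra hgt
      push_neg at hgt
      have h44 : (4:ℕ) = 2^2 := by norm_num
      have : 4 ≤ (n - 2*k)^2 := h44 ▸ Nat.pow_le_pow_left hgt 2
      omega
    have hkeq : k = n/2 := by omega
    have hq1 : 1 ≤ q := by omega
    have hRWne : (R \ W).Nonempty := Finset.card_pos.mp (by rw [hRWcard]; omega)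
    obtain ⟨u, hu⟩ := hRWne
    have huR : u ∈ R := (Finset.mem_sdiff.mp hu).1
    have huS : u ∉ S := (Finset.mem_sdiff.mp huR).2
    -- tail degrees all equal k
    have hBtight : ∑ x ∈ R \ W, G.degree x = q * k := by
      have h10 : 2*T + k*(k-1) = 2*(k*(n-k)) := by
        have := hsum_split; have := hA_eq
        omega
      have h6 : k * (n - k) = k*(k-1) + k*q := by rw [← e1]; ring
      have h11 : q * k = k * q := by ring
      omega
    have hudeg : G.degree u = k := by
      by_contra hne
      have hlt : G.degree u < k := lt_of_le_of_ne (hSc u huS) hne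
      have hstrict : ∑ x ∈ R \ W, G.degree x < ∑ _x ∈ R \ W, k := by
        refine Finset.sum_lt_sum (fun x hx => hSc x (Finset.mem_sdiff.mp
          (Finset.mem_sdiff.mp hx).1).2) ⟨u, hu, hlt⟩
      rw [Finset.sum_const, hRWcard, smul_eq_mul] at hstrict
      omega
    -- all neighbors of u are in S
    have hpointR : (G.neighborFinset u ∩ S).card = G.degree u := by
      by_contra hne
      have hlt : (G.neighborFinset u ∩ S).card < G.degree u :=
        lt_of_le_of_ne (hinterR u huR) hne
      have hstrict : ∑ x ∈ R, (G.neighborFinset x ∩ S).card < ∑ x ∈ R, G.degree x :=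
        Finset.sum_lt_sum hinterR ⟨u, huR, hlt⟩
      rw [← hT] at hstrict
      omega
    have hnbr : G.neighborFinset u = S := by
      have hEq2 : G.neighborFinset u ∩ S = G.neighborFinset u :=
        Finset.eq_of_subset_of_card_le Finset.inter_subset_left
          (by rw [hpointR, hdeg_def])
      have hsub2 : G.neighborFinset u ⊆ S := by
        rw [← hEq2]; exact Finset.inter_subset_right
      refine Finset.eq_of_subset_of_card_le hsub2 ?_
      rw [hScard, hdeg_def, hudeg]
    refine ⟨insert u S, ?_, ?_⟩
    · rw [Finset.coe_insert]
      refine SimpleGraph.IsClique.insert hclique ?_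
      intro b hb hbne
      have hbmem : b ∈ G.neighborFinset u := by rw [hnbr]; exact hb
      exact (mem_neighborFinset G u b).mp hbmem
    · rw [Finset.card_insert_of_notMem huS, hScard]
      omega

theorem cliqueNum_le_half {V : Type*} [Fintype V] [DecidableEq V] (G : SimpleGraph V)
    [DecidableRel G.Adj]
    (hint : ∀ j, 1 ≤ j → (∃ v, j ≤ G.degree v) → ∃ v, G.degree v = j) :
    G.cliqueNum ≤ Fintype.card V / 2 + 1 := by
  classical
  obtain ⟨s, hs⟩ := G.exists_isNClique_cliqueNum
  rw [← hs.card_eq]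
  by_cases hc : s.card ≤ 1
  · omega
  · push_neg at hc
    have hdegs : ∀ v ∈ s, s.card - 1 ≤ G.degree v := by
      intro v hv
      have hsub : s.erase v ⊆ G.neighborFinset v := by
        intro u hu
        rw [mem_neighborFinset]
        obtain ⟨hne, hus⟩ := Finset.mem_erase.mp hu
        exact hs.isClique (Finset.mem_coe.mpr hv) (Finset.mem_coe.mpr hus) (fun h => hne h.symm)
      calc s.card - 1 = (s.erase v).card := (Finset.card_erase_of_mem hv).symm
        _ ≤ (G.neighborFinset v).card := Finset.card_le_card hsub
        _ = G.degree v := rfl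
    have hsubfilter : s ⊆ Finset.univ.filter (fun v => s.card - 1 ≤ G.degree v) := by
      intro v hv
      rw [Finset.mem_filter]
      exact ⟨Finset.mem_univ v, hdegs v hv⟩
    have hcard := Finset.card_le_card hsubfilter
    obtain ⟨v1, hv1⟩ : s.Nonempty := Finset.card_pos.mp (by omega)
    have hB := lemB G hint (s.card - 1) (by omega) ⟨v1, hdegs v1 hv1⟩
    omega

theorem colorable_half {V : Type*} [Fintype V] [DecidableEq V] (G : SimpleGraph V)
    [DecidableRel G.Adj]
    (hint : ∀ j, 1 ≤ j → (∃ v, j ≤ G.degree v) → ∃ v, G.degree v = j) :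
    G.Colorable (Fintype.card V / 2 + 1) := by
  classical
  apply greedy_colorable
  intro t ht
  by_cases hc : t.card ≤ Fintype.card V / 2 + 1
  · obtain ⟨v, hv⟩ := ht
    refine ⟨v, hv, ?_⟩
    have h1 : 1 ≤ t.card := Finset.card_pos.mpr ⟨v, hv⟩
    calc ((t.erase v).filter (G.Adj v)).card ≤ (t.erase v).card := Finset.card_filter_le _ _
      _ = t.card - 1 := by rw [Finset.card_erase_of_mem hv]
      _ ≤ Fintype.card V / 2 := by omega
  · push_neg at hc
    set m := Fintype.card V + 1 - t.card with hm
    have htn : t.card ≤ Fintype.card V := by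
      calc t.card ≤ (Finset.univ : Finset V).card := Finset.card_le_card (Finset.subset_univ t)
        _ = Fintype.card V := Finset.card_univ
    have hm1 : 1 ≤ m := by omega
    by_cases hex : ∃ v ∈ t, G.degree v ≤ m
    · obtain ⟨v, hvt, hvd⟩ := hex
      refine ⟨v, hvt, ?_⟩
      have hsub : (t.erase v).filter (G.Adj v) ⊆ G.neighborFinset v := by
        intro u hu
        rw [mem_neighborFinset]
        exact (Finset.mem_filter.mp hu).2
      calc ((t.erase v).filter (G.Adj v)).card ≤ (G.neighborFinset v).card :=
            Finset.card_le_card hsub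
        _ = G.degree v := rfl
        _ ≤ Fintype.card V / 2 := by omega
    · push_neg at hex
      exfalso
      have hsub : t ⊆ Finset.univ.filter (fun v => m+1 ≤ G.degree v) := by
        intro v hv
        rw [Finset.mem_filter]
        exact ⟨Finset.mem_univ v, by have := hex v hv; omega⟩
      have hcard := Finset.card_le_card hsub
      obtain ⟨v1, hv1⟩ := ht
      have hB := lemB G hint (m+1) (by omega) ⟨v1, by have := hex v1 hv1; omega⟩
      omega

theorem exists_degree_eq {V : Type*} [Fintype V] (G : SimpleGraph V) [DecidableRel G.Adj]
    (hG : GlobalAmoeba G) (g : ℕ) (hg : 1 ≤ g) (hex : ∃ v, g ≤ G.degree v) :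
    ∃ v, G.degree v = g := by
  classical
  by_contra hno
  push_neg at hno
  obtain ⟨T, hT⟩ := hG
  set t := T + 1 with ht
  have hla : LocalAmoeba (addIsolated G t) := hT t (by omega)
  set H := addIsolated G t with hH
  set A : Set (V ⊕ Fin t) := {x | ncdeg H x < g} with hA
  have hNog : ∀ x : V ⊕ Fin t, ncdeg H x ≠ g := by
    rintro (v | i)
    · rw [hH, ncdeg_addIsolated_inl]; exact hno v
    · rw [hH, ncdeg_addIsolated_inr]; omega
  have hgen : ∀ σ ∈ feasiblePerms H, σ '' A = A := by
    intro σ hσ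
    obtain ⟨r, s, k, l, -, heq⟩ := hσ
    have hsub : σ '' A ⊆ A := by
      rintro _ ⟨x, hx, rfl⟩
      have h2 : ncdeg H (σ x) = ncdeg (replaceG H r s k l) x := by
        rw [← heq, ncdeg_copy]
      have h3 : ncdeg H (σ x) ≤ ncdeg H x + 1 := by
        rw [h2]; exact (ncdeg_replace H r s k l x).1
      have hxA : ncdeg H x < g := hx
      have : ncdeg H (σ x) ≠ g := hNog _
      show ncdeg H (σ x) < g
      omega
    exact Set.eq_of_subset_of_ncard_le hsub
      (le_of_eq (Set.ncard_image_of_injective A σ.injective).symm) (Set.toFinite _)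
  set P : Subgroup (Equiv.Perm (V ⊕ Fin t)) :=
    { carrier := {σ | σ '' A = A}
      one_mem' := by simp
      mul_mem' := by
        intro σ τ hσ hτ
        show (σ * τ) '' A = A
        have : ⇑(σ * τ) = ⇑σ ∘ ⇑τ := rfl
        rw [this, Set.image_comp, hτ, hσ]
      inv_mem' := by
        intro σ hσ
        have hσ' : ⇑σ '' A = A := hσ
        show ⇑(σ⁻¹) '' A = A
        conv_lhs => rw [← hσ']
        rw [← Set.image_comp]
        have h9 : ⇑(σ⁻¹) ∘ ⇑σ = id := funext fun x => σ.symm_apply_apply x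
        rw [h9, Set.image_id] } with hP
  have hle : ampGroup H ≤ P := by
    rw [ampGroup]
    exact (Subgroup.closure_le P).mpr (fun σ hσ => hgen σ hσ)
  rw [hla] at hle
  obtain ⟨v₀, hv₀⟩ := hex
  set a : V ⊕ Fin t := Sum.inr ⟨0, by omega⟩ with ha
  set b : V ⊕ Fin t := Sum.inl v₀ with hb
  have haA : a ∈ A := by
    show ncdeg H a < g
    rw [hH, ha, ncdeg_addIsolated_inr]; omega
  have hbA : b ∉ A := by
    show ¬ ncdeg H b < g
    rw [hH, hb, ncdeg_addIsolated_inl]; omega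
  have hswap : Equiv.swap a b ∈ P := hle (by trivial)
  have : (Equiv.swap a b) '' A = A := hswap
  apply hbA
  rw [← this]
  exact ⟨a, haA, Equiv.swap_apply_left a b⟩

theorem stmt19 {V : Type*} [Fintype V] (G : SimpleGraph V) [DecidableRel G.Adj]
    (hG : GlobalAmoeba G)
    (hδ : (∃ v : V, G.degree v = 1) ∧ ∀ v : V, 1 ≤ G.degree v) :
    G.edgeFinset.card ≤ Fintype.card V ^ 2 / 4 ∧
    G.cliqueNum ≤ Fintype.card V / 2 + 1 ∧
    G.chromaticNumber ≤ (Fintype.card V / 2 + 1 : ℕ) ∧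
    (G.edgeFinset.card = Fintype.card V ^ 2 / 4 →
      G.cliqueNum = Fintype.card V / 2 + 1 ∧
      G.chromaticNumber = (Fintype.card V / 2 + 1 : ℕ)) := by
  classical
  obtain ⟨v1, hv1⟩ := hδ.1
  have hV : 0 < Fintype.card V := Fintype.card_pos_iff.mpr ⟨v1⟩
  have hint : ∀ j, 1 ≤ j → (∃ v, j ≤ G.degree v) → ∃ v, G.degree v = j :=
    fun j hj hex => exists_degree_eq G hG j hj hex
  obtain ⟨hedge, hcliqueimp⟩ := main_count G hint hδ.2 hV
  have hχle : G.chromaticNumber ≤ (Fintype.card V / 2 + 1 : ℕ) :=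
    (colorable_half G hint).chromaticNumber_le
  have hωle : G.cliqueNum ≤ Fintype.card V / 2 + 1 := cliqueNum_le_half G hint
  refine ⟨hedge, hωle, hχle, ?_⟩
  intro heq
  obtain ⟨s, hs, hscard⟩ := hcliqueimp heq
  constructor
  · refine le_antisymm hωle ?_
    have h1 : s.card ≤ G.cliqueNum := hs.card_le_cliqueNum
    rw [hscard] at h1
    exact h1
  · refine le_antisymm hχle ?_
    have h1 : (s.card : ℕ∞) ≤ G.chromaticNumber := hs.card_le_chromaticNumber
    rw [hscard] at h1
    exact h1
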